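/- Let q be a prime and let f be a monic polynomial over the q-adic integers ℤ_q. Suppose that the reduction of f modulo q factorizes as f̄ = g₀·h₀ where g₀ and h₀ are coprime monic polynomials over 𝔽_q. Then there exist monic polynomials g and h over ℤ_q such that the reduction of g modulo q equals g₀, the reduction of h modulo q equals h₀, and f = g·h. -/

import Mathlib

open Polynomial

variable {q : ℕ} [hq : Fact q.Prime]

private lemma phi_surj : Function.Surjective (PadicInt.toZMod : ℤ_[q] → ZMod q) := by
  have : NeZero q := ⟨hq.out.ne_zero⟩
  intro x
  obtain ⟨m, rfl⟩ := ZMod.natCast_zmod_surjective (n := q) x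
  exact ⟨(m : ℤ_[q]), by rw [map_natCast]⟩

private lemma phi_eq_zero {x : ℤ_[q]} :
    PadicInt.toZMod x = 0 ↔ (q : ℤ_[q]) ∣ x := by
  rw [← RingHom.mem_ker, PadicInt.ker_toZMod, PadicInt.maximalIdeal_eq_span_p,
    Ideal.mem_span_singleton]

private lemma phi_q : PadicInt.toZMod ((q : ℤ_[q])) = 0 := by
  rw [map_natCast, ZMod.natCast_self]

private lemma map_phi_eq_zero {P : Polynomial ℤ_[q]} :
    P.map PadicInt.toZMod = 0 ↔ C (q : ℤ_[q]) ∣ P := by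
  rw [C_dvd_iff_dvd_coeff]
  simp only [Polynomial.ext_iff, coeff_map, coeff_zero, phi_eq_zero]

private lemma step_lemma
    (f : Polynomial ℤ_[q]) (hf : f.Monic)
    (g₀ h₀ : Polynomial (ZMod q)) (hg₀ : g₀.Monic) (hh₀ : h₀.Monic)
    (hcop : IsCoprime g₀ h₀)
    (k : ℕ) (hk : 1 ≤ k)
    (G H : Polynomial ℤ_[q]) (hG : G.Monic) (hH : H.Monic)
    (hGm : G.map PadicInt.toZMod = g₀) (hHm : H.map PadicInt.toZMod = h₀)
    (hfdeg : f.natDegree = g₀.natDegree + h₀.natDegree)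
    (hdvd : C ((q : ℤ_[q]) ^ k) ∣ f - G * H) :
    ∃ G' H' : Polynomial ℤ_[q], G'.Monic ∧ H'.Monic ∧
      G'.map PadicInt.toZMod = g₀ ∧ H'.map PadicInt.toZMod = h₀ ∧
      C ((q : ℤ_[q]) ^ (k + 1)) ∣ f - G' * H' ∧
      C ((q : ℤ_[q]) ^ k) ∣ G' - G ∧ C ((q : ℤ_[q]) ^ k) ∣ H' - H := by
  have hqne : (q : ℤ_[q]) ≠ 0 := Nat.cast_ne_zero.mpr hq.out.ne_zero
  have hqk : PadicInt.toZMod ((q : ℤ_[q]) ^ k) = 0 := by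
    obtain ⟨k, rfl⟩ := Nat.exists_eq_add_of_le hk
    rw [pow_add, pow_one, map_mul, phi_q, zero_mul]
  set n := g₀.natDegree with hn
  set m := h₀.natDegree with hm
  have hGdeg : G.natDegree = n := by rw [← hG.natDegree_map PadicInt.toZMod, hGm]
  have hHdeg : H.natDegree = m := by rw [← hH.natDegree_map PadicInt.toZMod, hHm]
  obtain ⟨E, hE⟩ := hdvd
  have hGH : (G * H).Monic := hG.mul hH
  have hGHdeg : (G * H).natDegree = n + m := by
    rw [hG.natDegree_mul hH, hGdeg, hHdeg]
  have hsub : (f - G * H).degree < ((n + m : ℕ) : WithBot ℕ) := by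
    have hd : f.degree = (G * H).degree := by
      rw [degree_eq_natDegree hf.ne_zero, degree_eq_natDegree hGH.ne_zero, hfdeg, hGHdeg]
    have := degree_sub_lt hd hf.ne_zero (by rw [hf.leadingCoeff, hGH.leadingCoeff])
    rwa [degree_eq_natDegree hf.ne_zero, hfdeg] at this
  have hEdeg : E.degree < ((n + m : ℕ) : WithBot ℕ) := by
    rcases eq_or_ne E 0 with rfl | hE0
    · rw [degree_zero]; exact WithBot.bot_lt_coe _
    · rw [hE, degree_mul, degree_C (pow_ne_zero k hqne), zero_add] at hsub
      exact hsub
  set Ebar := E.map PadicInt.toZMod with hEbar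
  have hEbardeg : Ebar.degree < ((n + m : ℕ) : WithBot ℕ) :=
    lt_of_le_of_lt degree_map_le hEdeg
  obtain ⟨a, b, hab⟩ := hcop
  set Vbar := (b * Ebar) %ₘ g₀ with hVbar
  set s := (b * Ebar) /ₘ g₀ with hs
  have hdivmod : (b * Ebar) %ₘ g₀ + g₀ * ((b * Ebar) /ₘ g₀) = b * Ebar :=
    modByMonic_add_div _ g₀
  set Ubar := a * Ebar + s * h₀ with hUbar
  have key : Ubar * g₀ + Vbar * h₀ = Ebar := by
    rw [hUbar, hVbar, hs]
    linear_combination Ebar * hab + h₀ * hdivmod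
  have hg₀deg : g₀.degree = (n : WithBot ℕ) := degree_eq_natDegree hg₀.ne_zero
  have hh₀deg : h₀.degree = (m : WithBot ℕ) := degree_eq_natDegree hh₀.ne_zero
  have hVdeg : Vbar.degree < (n : WithBot ℕ) := by
    have := degree_modByMonic_lt (b * Ebar) hg₀
    rwa [hg₀deg] at this
  have hUmul : Ubar * g₀ = Ebar - Vbar * h₀ := by linear_combination key
  have hUdeg : Ubar.degree < (m : WithBot ℕ) := by
    rcases eq_or_ne Ubar 0 with h0 | h0
    · rw [h0, degree_zero]; exact WithBot.bot_lt_coe _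
    · have h1 : (Ubar * g₀).degree < ((n + m : ℕ) : WithBot ℕ) := by
        rw [hUmul]
        refine lt_of_le_of_lt (degree_sub_le _ _) (max_lt hEbardeg ?_)
        refine lt_of_le_of_lt (degree_mul_le _ _) ?_
        rw [hh₀deg, Nat.cast_add]
        exact WithBot.add_lt_add_of_lt_of_le (by exact WithBot.coe_ne_bot) hVdeg le_rfl
      rw [degree_mul, hg₀deg, degree_eq_natDegree h0] at h1
      rw [degree_eq_natDegree h0]
      have : ((Ubar.natDegree + n : ℕ) : WithBot ℕ) < ((n + m : ℕ) : WithBot ℕ) := by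
        rw [Nat.cast_add]; exact h1
      rw [Nat.cast_lt] at this
      exact_mod_cast Nat.cast_lt.mpr (by omega : Ubar.natDegree < m)
  -- lift Vbar and Ubar
  obtain ⟨V, hVmap, hVdeg'⟩ := mem_lifts_and_degree_eq
    ((mem_lifts _).mpr (Polynomial.map_surjective _ phi_surj Vbar))
  obtain ⟨U, hUmap, hUdeg'⟩ := mem_lifts_and_degree_eq
    ((mem_lifts _).mpr (Polynomial.map_surjective _ phi_surj Ubar))
  set c : Polynomial ℤ_[q] := C ((q : ℤ_[q]) ^ k) with hc
  have hcV : ∀ (V : Polynomial ℤ_[q]), (c * V).degree ≤ V.degree := fun V =>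
    le_trans (degree_mul_le _ _) (by
      refine le_trans (add_le_add degree_C_le le_rfl) ?_
      rw [zero_add])
  have hGdeg' : G.degree = (n : WithBot ℕ) := by
    rw [degree_eq_natDegree hG.ne_zero, hGdeg]
  have hHdeg' : H.degree = (m : WithBot ℕ) := by
    rw [degree_eq_natDegree hH.ne_zero, hHdeg]
  set W : Polynomial ℤ_[q] := E - (V * H + U * G) - c * (V * U) with hW
  have hWdvd : C (q : ℤ_[q]) ∣ W := by
    rw [← map_phi_eq_zero]
    have : W.map PadicInt.toZMod = Ebar - (Vbar * h₀ + Ubar * g₀) := by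
      simp only [hW, Polynomial.map_sub, Polynomial.map_add, Polynomial.map_mul, hc,
        Polynomial.map_C, hqk, map_zero, C_0, zero_mul, sub_zero, hVmap, hUmap, hGm, hHm, hEbar]
    rw [this, ← key]; ring
  obtain ⟨W', hW'⟩ := hWdvd
  have e1 : f - (G + c * V) * (H + c * U) = c * W := by
    rw [hW]; linear_combination hE
  refine ⟨G + c * V, H + c * U, ?_, ?_, ?_, ?_, ⟨W', ?_⟩, ⟨V, by ring⟩, ⟨U, by ring⟩⟩
  · refine hG.add_of_left ?_
    rw [hGdeg']
    exact lt_of_le_of_lt (hcV V) (hVdeg' ▸ hVdeg)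
  · refine hH.add_of_left ?_
    rw [hHdeg']
    exact lt_of_le_of_lt (hcV U) (hUdeg' ▸ hUdeg)
  · simp only [Polynomial.map_add, Polynomial.map_mul, hc, Polynomial.map_C, hqk, C_0,
      zero_mul, add_zero, hGm]
  · simp only [Polynomial.map_add, Polynomial.map_mul, hc, Polynomial.map_C, hqk, C_0,
      zero_mul, add_zero, hHm]
  · rw [e1, hW', pow_succ, C_mul, hc]; ring

private lemma chain_rec {α : Type*} (P : ℕ → α → Prop) (Q : ℕ → α → α → Prop)
    (h0 : ∃ a, P 0 a) (hs : ∀ k a, P k a → ∃ b, P (k + 1) b ∧ Q k a b) :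
    ∃ f : ℕ → α, (∀ k, P k (f k)) ∧ ∀ k, Q k (f k) (f (k + 1)) := by
  let F : ∀ k : ℕ, {a // P k a} := fun k =>
    Nat.rec ⟨h0.choose, h0.choose_spec⟩
      (fun k ih => ⟨(hs k ih.1 ih.2).choose, (hs k ih.1 ih.2).choose_spec.1⟩) k
  exact ⟨fun k => (F k).1, fun k => (F k).2,
    fun k => (hs k (F k).1 (F k).2).choose_spec.2⟩

private lemma smod_iff (x y : ℤ_[q]) (k : ℕ) :
    (x ≡ y [SMOD ((IsLocalRing.maximalIdeal ℤ_[q]) ^ k • ⊤ : Submodule ℤ_[q] ℤ_[q])]) ↔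
      (q : ℤ_[q]) ^ k ∣ x - y := by
  simp only [← Ideal.one_eq_top, smul_eq_mul, mul_one, SModEq.sub_mem,
    PadicInt.maximalIdeal_eq_span_p, Ideal.span_singleton_pow, Ideal.mem_span_singleton]

private lemma padic_haus {x : ℤ_[q]} (h : ∀ k : ℕ, (q : ℤ_[q]) ^ k ∣ x) : x = 0 := by
  refine IsHausdorff.haus (I := IsLocalRing.maximalIdeal ℤ_[q]) inferInstance x fun k => ?_
  rw [smod_iff, sub_zero]
  exact h k

private lemma tele (c : ℕ → Polynomial ℤ_[q])
    (hc : ∀ k, C ((q : ℤ_[q]) ^ (k + 1)) ∣ c (k + 1) - c k) (i a b : ℕ) (hab : a ≤ b) :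
    (q : ℤ_[q]) ^ a ∣ (c b).coeff i - (c a).coeff i := by
  induction b, hab using Nat.le_induction with
  | base => simp
  | succ b hab ih =>
    have h1 : (q : ℤ_[q]) ^ a ∣ (c (b + 1)).coeff i - (c b).coeff i := by
      have h2 : (q : ℤ_[q]) ^ (b + 1) ∣ (c (b + 1)).coeff i - (c b).coeff i := by
        have := (C_dvd_iff_dvd_coeff _ _).mp (hc b) i
        rwa [coeff_sub] at this
      exact dvd_trans (pow_dvd_pow _ (by omega : a ≤ b + 1)) h2
    have := dvd_add h1 ih
    rwa [sub_add_sub_cancel] at this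

private lemma lim_exists (c : ℕ → Polynomial ℤ_[q])
    (hc : ∀ k, C ((q : ℤ_[q]) ^ (k + 1)) ∣ c (k + 1) - c k) :
    ∃ L : ℕ → ℤ_[q], ∀ i k, (q : ℤ_[q]) ^ k ∣ L i - (c k).coeff i := by
  have H : ∀ i : ℕ, ∃ L : ℤ_[q], ∀ k, (q : ℤ_[q]) ^ k ∣ L - (c k).coeff i := by
    intro i
    obtain ⟨L, hL⟩ := IsPrecomplete.prec
      (IsAdicComplete.toIsPrecomplete (I := IsLocalRing.maximalIdeal ℤ_[q]))
      (f := fun k => (c k).coeff i) (by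
        intro a b hab
        rw [smod_iff]
        exact (dvd_sub_comm).mp (tele c hc i a b hab))
    exact ⟨L, fun k => (dvd_sub_comm).mp ((smod_iff _ _ _).mp (hL k))⟩
  exact ⟨fun i => (H i).choose, fun i k => (H i).choose_spec k⟩

/-- Hensel's Lemma over the `q`-adic integers: if the reduction mod `q` of a monic
polynomial `f` over `ℤ_q` factorizes into coprime monic polynomials `g₀·h₀` over `𝔽_q`,
then `f = g·h` for monic polynomials `g, h` over `ℤ_q` reducing to `g₀, h₀`. -/
theorem hensel_lift_coprime_factorization
    (q : ℕ) [hq : Fact q.Prime]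
    (f : Polynomial (PadicInt q)) (hf : f.Monic)
    (g₀ h₀ : Polynomial (ZMod q)) (hg₀ : g₀.Monic) (hh₀ : h₀.Monic)
    (hcop : IsCoprime g₀ h₀)
    (hfact : f.map (PadicInt.toZMod) = g₀ * h₀) :
    ∃ g h : Polynomial (PadicInt q), g.Monic ∧ h.Monic ∧
      g.map (PadicInt.toZMod) = g₀ ∧ h.map (PadicInt.toZMod) = h₀ ∧ f = g * h := by
  have hfdeg : f.natDegree = g₀.natDegree + h₀.natDegree := by
    rw [← hf.natDegree_map PadicInt.toZMod, hfact, hg₀.natDegree_mul hh₀]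
  -- build the sequence of approximate factorizations
  obtain ⟨seq, hseq, hcompat⟩ := chain_rec
    (P := fun k (p : Polynomial ℤ_[q] × Polynomial ℤ_[q]) =>
      p.1.Monic ∧ p.2.Monic ∧ p.1.map PadicInt.toZMod = g₀ ∧ p.2.map PadicInt.toZMod = h₀ ∧
        C ((q : ℤ_[q]) ^ (k + 1)) ∣ f - p.1 * p.2)
    (Q := fun k p p' =>
      C ((q : ℤ_[q]) ^ (k + 1)) ∣ p'.1 - p.1 ∧ C ((q : ℤ_[q]) ^ (k + 1)) ∣ p'.2 - p.2)
    (by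
      obtain ⟨G, hGmap, _, hGmon⟩ := lifts_and_degree_eq_and_monic
        ((mem_lifts _).mpr (Polynomial.map_surjective _ phi_surj g₀)) hg₀
      obtain ⟨H, hHmap, _, hHmon⟩ := lifts_and_degree_eq_and_monic
        ((mem_lifts _).mpr (Polynomial.map_surjective _ phi_surj h₀)) hh₀
      refine ⟨(G, H), hGmon, hHmon, hGmap, hHmap, ?_⟩
      rw [pow_one, ← map_phi_eq_zero]
      rw [Polynomial.map_sub, Polynomial.map_mul, hGmap, hHmap, hfact, sub_self])
    (by
      rintro k ⟨G, H⟩ ⟨h1, h2, h3, h4, h5⟩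
      obtain ⟨G', H', a1, a2, a3, a4, a5, a6, a7⟩ :=
        step_lemma f hf g₀ h₀ hg₀ hh₀ hcop (k + 1) (Nat.le_add_left 1 k)
          G H h1 h2 h3 h4 hfdeg h5
      exact ⟨(G', H'), ⟨a1, a2, a3, a4, a5⟩, a6, a7⟩)
  set Gs : ℕ → Polynomial ℤ_[q] := fun k => (seq k).1 with hGs
  set Hs : ℕ → Polynomial ℤ_[q] := fun k => (seq k).2 with hHs
  have hGmon : ∀ k, (Gs k).Monic := fun k => (hseq k).1
  have hHmon : ∀ k, (Hs k).Monic := fun k => (hseq k).2.1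
  have hGmap : ∀ k, (Gs k).map PadicInt.toZMod = g₀ := fun k => (hseq k).2.2.1
  have hHmap : ∀ k, (Hs k).map PadicInt.toZMod = h₀ := fun k => (hseq k).2.2.2.1
  have hfGH : ∀ k, C ((q : ℤ_[q]) ^ (k + 1)) ∣ f - Gs k * Hs k := fun k => (hseq k).2.2.2.2
  have hGc : ∀ k, C ((q : ℤ_[q]) ^ (k + 1)) ∣ Gs (k + 1) - Gs k := fun k => (hcompat k).1
  have hHc : ∀ k, C ((q : ℤ_[q]) ^ (k + 1)) ∣ Hs (k + 1) - Hs k := fun k => (hcompat k).2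
  have hGdeg : ∀ k, (Gs k).natDegree = g₀.natDegree := fun k => by
    rw [← (hGmon k).natDegree_map PadicInt.toZMod, hGmap]
  have hHdeg : ∀ k, (Hs k).natDegree = h₀.natDegree := fun k => by
    rw [← (hHmon k).natDegree_map PadicInt.toZMod, hHmap]
  -- limits
  obtain ⟨L, hL⟩ := lim_exists Gs hGc
  obtain ⟨M, hM⟩ := lim_exists Hs hHc
  -- a general construction of the limit polynomial
  have build : ∀ (c : ℕ → Polynomial ℤ_[q]) (N : ℕ) (L : ℕ → ℤ_[q]),
      (∀ k, (c k).natDegree = N) → (∀ k, (c k).Monic) →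
      (∀ k, C ((q : ℤ_[q]) ^ (k + 1)) ∣ c (k + 1) - c k) →
      (∀ i k, (q : ℤ_[q]) ^ k ∣ L i - (c k).coeff i) →
      ∃ g : Polynomial ℤ_[q], g.Monic ∧ ∀ k, C ((q : ℤ_[q]) ^ (k + 1)) ∣ g - c k := by
    intro c N L hdeg hmon hc hLc
    set g : Polynomial ℤ_[q] := ∑ i ∈ Finset.range (N + 1), monomial i (L i) with hg
    have gcoeff : ∀ i, g.coeff i = if i ≤ N then L i else 0 := by
      intro i
      rw [hg, finset_sum_coeff]
      simp only [coeff_monomial, Finset.sum_ite_eq', Finset.mem_range, Nat.lt_succ_iff]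
    have hLN : L N = 1 := by
      rw [← sub_eq_zero]
      refine padic_haus fun k => ?_
      have hck : (c k).coeff N = 1 := by rw [← hdeg k]; exact (hmon k).coeff_natDegree
      have := hLc N k
      rwa [hck] at this
    have gmon : g.Monic := by
      refine monic_of_degree_le N ?_ ?_
      · refine le_trans (degree_sum_le _ _) ?_
        refine Finset.sup_le fun i hi => le_trans (degree_monomial_le i _) ?_
        exact_mod_cast Nat.cast_le.mpr (Nat.lt_succ_iff.mp (Finset.mem_range.mp hi))
      · rw [gcoeff N, if_pos le_rfl, hLN]
    refine ⟨g, gmon, fun k => ?_⟩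
    rw [C_dvd_iff_dvd_coeff]
    intro i
    rw [coeff_sub, gcoeff i]
    by_cases hi : i ≤ N
    · rw [if_pos hi]
      have d1 := hLc i (k + 1)
      have d2 : (q : ℤ_[q]) ^ (k + 1) ∣ (c (k + 1)).coeff i - (c k).coeff i := by
        have := (C_dvd_iff_dvd_coeff _ _).mp (hc k) i
        rwa [coeff_sub] at this
      have := dvd_add d1 d2
      rwa [sub_add_sub_cancel] at this
    · rw [if_neg hi]
      have hz : (c k).coeff i = 0 := coeff_eq_zero_of_natDegree_lt (by rw [hdeg k]; omega)
      rw [hz, sub_zero]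
      exact dvd_zero _
  obtain ⟨g, gmon, hgdiff⟩ := build Gs g₀.natDegree L hGdeg hGmon hGc hL
  obtain ⟨h, hmon, hhdiff⟩ := build Hs h₀.natDegree M hHdeg hHmon hHc hM
  have gmap : g.map PadicInt.toZMod = g₀ := by
    have h1 : C (q : ℤ_[q]) ∣ g - Gs 0 := by simpa using hgdiff 0
    have h2 : (g - Gs 0).map PadicInt.toZMod = 0 := map_phi_eq_zero.mpr h1
    rw [Polynomial.map_sub, sub_eq_zero] at h2
    rw [h2, hGmap 0]
  have hmap : h.map PadicInt.toZMod = h₀ := by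
    have h1 : C (q : ℤ_[q]) ∣ h - Hs 0 := by simpa using hhdiff 0
    have h2 : (h - Hs 0).map PadicInt.toZMod = 0 := map_phi_eq_zero.mpr h1
    rw [Polynomial.map_sub, sub_eq_zero] at h2
    rw [h2, hHmap 0]
  have feq : f = g * h := by
    rw [← sub_eq_zero]
    refine Polynomial.ext fun i => ?_
    rw [coeff_zero]
    refine padic_haus fun k => ?_
    have e : f - g * h = (f - Gs k * Hs k) - (g - Gs k) * Hs k - g * (h - Hs k) := by ring
    have d := dvd_sub (dvd_sub (hfGH k) ((hgdiff k).mul_right (Hs k))) ((hhdiff k).mul_left g)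
    rw [← e] at d
    have := (C_dvd_iff_dvd_coeff _ _).mp d i
    exact dvd_trans (pow_dvd_pow _ (Nat.le_succ k)) this
  exact ⟨g, h, gmon, hmon, gmap, hmap, feq⟩
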